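/- arXiv:1202.4110 — 8 statements merged into one kernel-verified Lean document; each statement's English description precedes it below -/
import Mathlib

section
/- Every coefficient of the Stern polynomial a(n; z) is either 0 or 1. -/
open Polynomial

/-- The Stern polynomials: a(0;z)=0, a(1;z)=1, a(2n;z)=a(n;z^2),
    a(2n+1;z)=z*a(n;z^2)+a(n+1;z^2). -/
noncomputable def stern : ℕ → Polynomial ℤ
  | 0 => 0
  | 1 => 1
  | (n+2) =>
    if _h : n % 2 = 0 then (stern (n/2+1)).comp (X^2)
    else X * (stern (n/2+1)).comp (X^2) + (stern (n/2+2)).comp (X^2)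
  decreasing_by all_goals omega

theorem stern_coeff_zero_or_one (n k : ℕ) :
    (stern n).coeff k = 0 ∨ (stern n).coeff k = 1 := by
  induction n using Nat.strong_induction_on generalizing k with
  | _ n ih =>
    match n with
    | 0 => left; simp [stern]
    | 1 =>
      rw [stern, Polynomial.coeff_one]
      split <;> simp
    | (n+2) =>
      rw [stern]
      split
      · rw [← Polynomial.expand_eq_comp_X_pow, Polynomial.coeff_expand (by norm_num)]
        split
        · exact ih _ (by omega) _
        · left; rfl
      · rw [← Polynomial.expand_eq_comp_X_pow, ← Polynomial.expand_eq_comp_X_pow,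
          Polynomial.coeff_add]
        rcases Nat.even_or_odd k with ⟨j, hj⟩ | ⟨j, hj⟩
        · have h1 : (X * Polynomial.expand ℤ 2 (stern (n/2+1))).coeff k = 0 := by
            rcases Nat.eq_zero_or_pos k with hk | hk
            · subst hk; simp
            · obtain ⟨m, rfl⟩ : ∃ m, k = m + 1 := ⟨k - 1, by omega⟩
              rw [Polynomial.coeff_X_mul, Polynomial.coeff_expand (by norm_num)]
              rw [if_neg (by omega)]
          rw [h1, zero_add, Polynomial.coeff_expand (by norm_num),
            if_pos (by omega : 2 ∣ k)]
          exact ih _ (by omega) _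
        · have h2 : (Polynomial.expand ℤ 2 (stern (n/2+2))).coeff k = 0 := by
            rw [Polynomial.coeff_expand (by norm_num), if_neg (by omega)]
          subst hj
          rw [h2, add_zero, Polynomial.coeff_X_mul,
            Polynomial.coeff_expand (by norm_num), if_pos (by omega : 2 ∣ 2*j)]
          exact ih _ (by omega) _
end

section
/- For n ≥ 1, the degree of the Stern polynomial a(n; z) equals (n − 2^{e(n)})/2, where e(n) is the 2-adic valuation of n (the largest k with 2^k dividing n). -/
open Polynomial

lemma stern_two_mul (k : ℕ) : stern (2*(k+1)) = (stern (k+1)).comp (X^2) := by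
  rw [show 2*(k+1) = (2*k)+2 by ring, stern]
  simp [Nat.mul_div_cancel_left, Nat.mul_mod_right]

lemma stern_two_mul_add_one (k : ℕ) :
    stern (2*(k+1)+1) = X * (stern (k+1)).comp (X^2) + (stern (k+2)).comp (X^2) := by
  rw [show 2*(k+1)+1 = (2*k+1)+2 by ring, stern]
  have h1 : (2*k+1) % 2 = 1 := by omega
  have h2 : (2*k+1) / 2 = k := by omega
  simp [h1, h2]

lemma two_pow_padicValNat_le (m : ℕ) (hm : 1 ≤ m) : 2 ^ (padicValNat 2 m) ≤ m :=
  Nat.le_of_dvd hm pow_padicValNat_dvd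

lemma padicValNat_two_mul (m : ℕ) (hm : 1 ≤ m) :
    padicValNat 2 (2*m) = padicValNat 2 m + 1 := by
  rw [padicValNat.mul (by norm_num) (by omega), padicValNat.self (by norm_num)]
  omega

lemma stern_key (n : ℕ) (hn : 1 ≤ n) :
    (stern n).Monic ∧ (stern n).natDegree * 2 = n - 2 ^ (padicValNat 2 n) := by
  induction n using Nat.strong_induction_on with
  | _ n ih =>
    match n, hn with
    | 1, _ => simp [stern, monic_one]
    | (n+2), _ =>
      rcases Nat.even_or_odd (n+2) with ⟨m, hm⟩ | ⟨m, hm⟩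
      · -- even case : n+2 = 2*m, m ≥ 1
        obtain ⟨k, rfl⟩ : ∃ k, m = k + 1 := ⟨m - 1, by omega⟩
        have heq : n + 2 = 2*(k+1) := by omega
        rw [heq, stern_two_mul]
        obtain ⟨hmon, hdeg⟩ := ih (k+1) (by omega) (by omega)
        have hle := two_pow_padicValNat_le (k+1) (by omega)
        constructor
        · exact hmon.comp (monic_X_pow 2) (by simp)
        · rw [natDegree_comp, natDegree_X_pow, padicValNat_two_mul (k+1) (by omega)]
          rw [pow_succ]
          omega
      · -- odd case : n+2 = 2*m+1, m ≥ 1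
        obtain ⟨k, rfl⟩ : ∃ k, m = k + 1 := ⟨m - 1, by omega⟩
        have heq : n + 2 = 2*(k+1)+1 := by omega
        rw [heq, stern_two_mul_add_one]
        obtain ⟨hmonA, hdegA⟩ := ih (k+1) (by omega) (by omega)
        obtain ⟨hmonB, hdegB⟩ := ih (k+2) (by omega) (by omega)
        have hleA := two_pow_padicValNat_le (k+1) (by omega)
        have hleB := two_pow_padicValNat_le (k+2) (by omega)
        have hA : (X * (stern (k+1)).comp (X^2)).Monic :=
          (monic_X).mul (hmonA.comp (monic_X_pow 2) (by simp))
        have hB : ((stern (k+2)).comp (X^2)).Monic :=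
          hmonB.comp (monic_X_pow 2) (by simp)
        have hdA : (X * (stern (k+1)).comp (X^2)).natDegree
            = 1 + (stern (k+1)).natDegree * 2 := by
          rw [natDegree_mul X_ne_zero (hmonA.comp (monic_X_pow 2) (by simp)).ne_zero,
            natDegree_comp, natDegree_X, natDegree_X_pow]
        have hdB : ((stern (k+2)).comp (X^2)).natDegree = (stern (k+2)).natDegree * 2 := by
          rw [natDegree_comp, natDegree_X_pow]
        have hval : padicValNat 2 (2*(k+1)+1) = 0 :=
          padicValNat.eq_zero_of_not_dvd (by omega)
        rw [hval]
        rcases Nat.even_or_odd (k+1) with ⟨j, hj⟩ | ⟨j, hj⟩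
        · -- k+1 even : B dominates
          have hvA : 1 ≤ padicValNat 2 (k+1) :=
            one_le_padicValNat_of_dvd (by omega) ⟨j, by omega⟩
          have h2A : 2 ≤ 2 ^ padicValNat 2 (k+1) :=
            le_trans (by norm_num) (Nat.pow_le_pow_right (by norm_num) hvA)
          have hvB : padicValNat 2 (k+2) = 0 :=
            padicValNat.eq_zero_of_not_dvd (by omega)
          rw [hvB] at hdegB
          have hlt : (X * (stern (k+1)).comp (X^2)).natDegree
              < ((stern (k+2)).comp (X^2)).natDegree := by
            rw [hdA, hdB]; omega
          constructor
          · exact hB.add_of_right (degree_lt_degree hlt)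
          · rw [natDegree_add_eq_right_of_natDegree_lt hlt, hdB]; omega
        · -- k+1 odd : X*A dominates
          have hvA : padicValNat 2 (k+1) = 0 :=
            padicValNat.eq_zero_of_not_dvd (by omega)
          have hvB : 1 ≤ padicValNat 2 (k+2) :=
            one_le_padicValNat_of_dvd (by omega) ⟨j+1, by omega⟩
          have h2B : 2 ≤ 2 ^ padicValNat 2 (k+2) :=
            le_trans (by norm_num) (Nat.pow_le_pow_right (by norm_num) hvB)
          rw [hvA] at hdegA
          have hlt : ((stern (k+2)).comp (X^2)).natDegree
              < (X * (stern (k+1)).comp (X^2)).natDegree := by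
            rw [hdA, hdB]; omega
          constructor
          · exact hA.add_of_left (degree_lt_degree hlt)
          · rw [natDegree_add_eq_left_of_natDegree_lt hlt, hdA]; omega

theorem stern_natDegree (n : ℕ) (hn : 1 ≤ n) :
    (stern n).natDegree = (n - 2 ^ (padicValNat 2 n)) / 2 := by
  have h := (stern_key n hn).2
  omega
end

section
/- For n ≥ 1 not a power of 2, the degree of a(n; z) is at least n/3. -/
open Polynomial

lemma stern_even (k : ℕ) : stern (2*k+2) = (stern (k+1)).comp (X^2) := by
  rw [stern]
  simp [Nat.mul_div_cancel_left, Nat.mul_mod_right]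

lemma stern_odd (k : ℕ) :
    stern (2*k+3) = X * (stern (k+1)).comp (X^2) + (stern (k+2)).comp (X^2) := by
  have h : 2*k+3 = (2*k+1)+2 := by ring
  rw [h, stern]
  have h1 : (2*k+1) % 2 = 1 := by omega
  have h2 : (2*k+1) / 2 = k := by omega
  simp [h1, h2]

lemma stern_coeff_nonneg (n : ℕ) : ∀ i, 0 ≤ (stern n).coeff i := by
  induction n using Nat.strong_induction_on with
  | _ n ih =>
    match n with
    | 0 => simp [stern]
    | 1 => intro i; rw [stern, coeff_one]; split <;> norm_num
    | (n+2) =>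
      rcases Nat.even_or_odd n with ⟨k, hk⟩ | ⟨k, hk⟩
      · subst hk
        rw [show k+k+2 = 2*k+2 by ring, stern_even, ← expand_eq_comp_X_pow]
        intro i
        rw [coeff_expand (by norm_num)]
        split
        · exact ih (k+1) (by omega) _
        · exact le_refl 0
      · subst hk
        rw [show 2*k+1+2 = 2*k+3 by ring, stern_odd, ← expand_eq_comp_X_pow,
          ← expand_eq_comp_X_pow]
        intro i
        rw [coeff_add]
        apply add_nonneg
        · rcases i with _|i
          · simp
          · rw [coeff_X_mul, coeff_expand (by norm_num)]
            split
            · exact ih (k+1) (by omega) _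
            · exact le_refl 0
        · rw [coeff_expand (by norm_num)]
          split
          · exact ih (k+2) (by omega) _
          · exact le_refl 0

lemma stern_eval_one_pos (n : ℕ) (hn : 1 ≤ n) : 0 < (stern n).eval 1 := by
  induction n using Nat.strong_induction_on with
  | _ n ih =>
    match n with
    | 1 => simp [stern]
    | (n+2) =>
      rcases Nat.even_or_odd n with ⟨k, hk⟩ | ⟨k, hk⟩
      · subst hk
        rw [show k+k+2 = 2*k+2 by ring, stern_even, eval_comp]
        simpa using ih (k+1) (by omega) (by omega)
      · subst hk
        rw [show 2*k+1+2 = 2*k+3 by ring, stern_odd]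
        simp only [eval_add, eval_mul, eval_comp, eval_X, eval_pow, one_pow]
        have h1 := ih (k+1) (by omega) (by omega)
        have h2 := ih (k+2) (by omega) (by omega)
        nlinarith

lemma stern_ne_zero (n : ℕ) (hn : 1 ≤ n) : stern n ≠ 0 := by
  intro h
  have := stern_eval_one_pos n hn
  rw [h] at this
  simp at this

lemma natDegree_le_add_left {p q : Polynomial ℤ} (hp : ∀ i, 0 ≤ p.coeff i)
    (hq : ∀ i, 0 ≤ q.coeff i) (hp0 : p ≠ 0) :
    p.natDegree ≤ (p + q).natDegree := by
  apply le_natDegree_of_ne_zero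
  rw [coeff_add]
  have h1 : 0 < p.coeff p.natDegree := by
    rcases lt_or_eq_of_le (hp p.natDegree) with h | h
    · exact h
    · exact absurd h.symm (mt leadingCoeff_eq_zero.mp hp0)
  have := hq p.natDegree
  positivity

lemma stern_natDegree_even (k : ℕ) :
    (stern (2*k+2)).natDegree = 2 * (stern (k+1)).natDegree := by
  rw [stern_even, ← expand_eq_comp_X_pow, natDegree_expand, mul_comm]

lemma X_mul_coeff_nonneg {p : Polynomial ℤ} (hp : ∀ i, 0 ≤ p.coeff i) :
    ∀ i, 0 ≤ (X * p).coeff i := by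
  intro i
  rcases i with _|i
  · simp
  · rw [coeff_X_mul]; exact hp i

lemma expand_coeff_nonneg {p : Polynomial ℤ} (hp : ∀ i, 0 ≤ p.coeff i) :
    ∀ i, 0 ≤ (p.comp (X^2)).coeff i := by
  intro i
  rw [← expand_eq_comp_X_pow, coeff_expand (by norm_num)]
  split
  · exact hp _
  · exact le_refl 0

lemma stern_natDegree_odd_left (k : ℕ) :
    2 * (stern (k+1)).natDegree + 1 ≤ (stern (2*k+3)).natDegree := by
  rw [stern_odd]
  have hA : (stern (k+1)).comp (X^2) ≠ 0 := by
    rw [← expand_eq_comp_X_pow]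
    exact (expand_ne_zero (by norm_num)).mpr (stern_ne_zero _ (by omega))
  have h1 : (X * (stern (k+1)).comp (X^2)).natDegree = 2 * (stern (k+1)).natDegree + 1 := by
    rw [natDegree_mul X_ne_zero hA, natDegree_X, ← expand_eq_comp_X_pow, natDegree_expand]
    ring
  calc 2 * (stern (k+1)).natDegree + 1 = (X * (stern (k+1)).comp (X^2)).natDegree := h1.symm
    _ ≤ _ := natDegree_le_add_left
        (X_mul_coeff_nonneg (expand_coeff_nonneg (stern_coeff_nonneg _)))
        (expand_coeff_nonneg (stern_coeff_nonneg _))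
        (mul_ne_zero X_ne_zero hA)

lemma stern_natDegree_odd_right (k : ℕ) :
    2 * (stern (k+2)).natDegree ≤ (stern (2*k+3)).natDegree := by
  rw [stern_odd, add_comm (X * (stern (k+1)).comp (X^2))]
  have hB : (stern (k+2)).comp (X^2) ≠ 0 := by
    rw [← expand_eq_comp_X_pow]
    exact (expand_ne_zero (by norm_num)).mpr (stern_ne_zero _ (by omega))
  have h1 : ((stern (k+2)).comp (X^2)).natDegree = 2 * (stern (k+2)).natDegree := by
    rw [← expand_eq_comp_X_pow, natDegree_expand]; ring
  calc 2 * (stern (k+2)).natDegree = ((stern (k+2)).comp (X^2)).natDegree := h1.symm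
    _ ≤ _ := natDegree_le_add_left
        (expand_coeff_nonneg (stern_coeff_nonneg _))
        (X_mul_coeff_nonneg (expand_coeff_nonneg (stern_coeff_nonneg _)))
        hB

lemma stern_main (n : ℕ) (hn : 1 ≤ n) (h : ¬ ∃ k : ℕ, n = 2 ^ k) :
    n ≤ 3 * (stern n).natDegree := by
  induction n using Nat.strong_induction_on with
  | _ n ih =>
    match n, hn, h with
    | 1, _, h => exact absurd ⟨0, rfl⟩ h
    | (n+2), _, h =>
      rcases Nat.even_or_odd n with ⟨k, hk⟩ | ⟨k, hk⟩
      · -- even: n+2 = 2k+2 = 2(k+1)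
        subst hk
        have hm : ¬ ∃ j : ℕ, k+1 = 2 ^ j := by
          rintro ⟨j, hj⟩
          exact h ⟨j+1, by rw [show k+k+2 = 2*(k+1) by ring, hj]; ring⟩
        have := ih (k+1) (by omega) (by omega) hm
        rw [show k+k+2 = 2*k+2 by ring, stern_natDegree_even]
        omega
      · subst hk
        rw [show 2*k+1+2 = 2*k+3 by ring]
        by_cases h2 : ∃ j : ℕ, k+2 = 2 ^ j
        · rcases Nat.eq_zero_or_pos k with rfl | hk0
          · -- n = 3
            have := stern_natDegree_odd_left 0
            simp [stern] at this ⊢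
            omega
          · -- k ≥ 1, so k+1 ≥ 2 and k+2 = 2^j power, k+1 odd not power
            obtain ⟨j, hj⟩ := h2
            have hm : ¬ ∃ i : ℕ, k+1 = 2 ^ i := by
              rintro ⟨i, hi⟩
              -- k+1 and k+2 both powers of 2, k+1 ≥ 2
              have h2i : 2 ≤ 2 ^ i := by omega
              have h2j : 2 ^ i + 1 = 2 ^ j := by omega
              have hi1 : 1 ≤ i := by
                by_contra hc
                interval_cases i <;> omega
              have : 2 ∣ 2 ^ i := dvd_pow_self 2 (by omega)
              have hj1 : 1 ≤ j := by
                by_contra hc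
                interval_cases j <;> omega
              have : 2 ∣ 2 ^ j := dvd_pow_self 2 (by omega)
              omega
            have := ih (k+1) (by omega) (by omega) hm
            have hb := stern_natDegree_odd_left k
            omega
        · have := ih (k+2) (by omega) (by omega) h2
          have hb := stern_natDegree_odd_right k
          omega

theorem stern_natDegree_ge (n : ℕ) (hn : 1 ≤ n)
    (h : ¬ ∃ k : ℕ, n = 2 ^ k) :
    (n : ℝ) / 3 ≤ (stern n).natDegree := by
  have := stern_main n hn h
  rw [div_le_iff₀ (by norm_num)]
  have h3 : (n:ℝ) ≤ 3 * (stern n).natDegree := by exact_mod_cast this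
  linarith
end

section
/- For every n ≥ 0, a(4n+3; −1) = −a(n), where a(n) is the Stern diatomic sequence. -/
open Polynomial

/-- The Stern diatomic sequence: a(0)=0, a(1)=1, a(2n)=a(n), a(2n+1)=a(n)+a(n+1). -/
def sternSeq : ℕ → ℕ
  | 0 => 0
  | 1 => 1
  | (n+2) =>
    if _h : n % 2 = 0 then sternSeq (n/2+1)
    else sternSeq (n/2+1) + sternSeq (n/2+2)
  decreasing_by all_goals omega

lemma stern_eval_one (n : ℕ) : (stern n).eval 1 = (sternSeq n : ℤ) := by
  induction n using Nat.strong_induction_on with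
  | _ n ih =>
    match n with
    | 0 => simp [stern, sternSeq]
    | 1 => simp [stern, sternSeq]
    | (k+2) =>
      rw [stern, sternSeq]
      split
      · rw [eval_comp]
        simp only [eval_pow, eval_X, one_pow]
        rw [ih (k/2+1) (by omega)]
      · simp only [eval_add, eval_mul, eval_comp, eval_pow, eval_X, one_pow, one_mul]
        rw [ih (k/2+1) (by omega), ih (k/2+2) (by omega)]
        push_cast
        ring

lemma sternSeq_odd (n : ℕ) : sternSeq (2*n+1) = sternSeq n + sternSeq (n+1) := by
  match n with
  | 0 => simp [sternSeq]
  | (m+1) =>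
    show sternSeq ((2*m+1)+2) = _
    rw [sternSeq]
    have h : (2*m+1) % 2 = 1 := by omega
    rw [dif_neg (by omega)]
    congr 2 <;> omega

lemma sternSeq_even (n : ℕ) : sternSeq (2*n+2) = sternSeq (n+1) := by
  show sternSeq ((2*n)+2) = _
  rw [sternSeq, dif_pos (by omega)]
  congr 1; omega

theorem stern_eval_neg_one (n : ℕ) :
    (stern (4 * n + 3)).eval (-1) = -(sternSeq n : ℤ) := by
  have h : 4 * n + 3 = (4*n+1) + 2 := by ring
  rw [h, stern, dif_neg (by omega)]
  have h1 : (4*n+1)/2+1 = 2*n+1 := by omega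
  have h2 : (4*n+1)/2+2 = 2*n+2 := by omega
  rw [h1, h2]
  simp only [eval_add, eval_mul, eval_comp, eval_pow, eval_X]
  have : ((-1 : ℤ))^2 = 1 := by ring
  rw [this, stern_eval_one, stern_eval_one, sternSeq_odd, sternSeq_even]
  push_cast
  ring
end

section
/- With s_k, t_k as in the previous context for a binary sequence {b_k}, if s_m ≠ 0 then the order of vanishing at z = 0 (i.e., the degree of the lowest-degree nonzero term) of s_m is exactly Σ_{j=0}^{m} 2^j b_j. -/
open Polynomial

lemma ntd_add_of_lt {p q : Polynomial ℤ} (hp : p ≠ 0)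
    (hq : ∀ n ≤ p.natTrailingDegree, q.coeff n = 0) :
    (p + q).natTrailingDegree = p.natTrailingDegree := by
  have hc : (p + q).coeff p.natTrailingDegree ≠ 0 := by
    rw [coeff_add, hq _ le_rfl, add_zero]
    exact (coeff_natTrailingDegree_ne_zero).2 hp
  refine le_antisymm (natTrailingDegree_le_of_ne_zero hc) ?_
  refine le_natTrailingDegree (fun h0 => hc (h0 ▸ rfl)) (fun m hm => ?_)
  rw [coeff_add, coeff_eq_zero_of_lt_natTrailingDegree hm, hq _ hm.le, add_zero]

lemma two_pow_sum (k : ℕ) : ∑ j ∈ Finset.range k, 2^j = 2^k - 1 := by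
  induction k with
  | zero => simp
  | succ n ihn =>
      rw [Finset.sum_range_succ, ihn]
      have : 1 ≤ 2^n := Nat.one_le_two_pow
      have : 2^(n+1) = 2 * 2^n := by ring
      omega

theorem sm_trailing_degree
    (b : ℕ → ℕ) (hb : ∀ k, b k = 0 ∨ b k = 1)
    (s t : ℕ → Polynomial ℤ)
    (hs0 : s 0 = 1) (ht0 : t 0 = 0)
    (hs : ∀ k, s (k+1) = C (1 - (b k : ℤ)) * s k + X^(2^k) * (C (b k : ℤ) * (s k - t k) + t k))
    (ht : ∀ k, t (k+1) = C (b k : ℤ) * s k + t k)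
    (m : ℕ) (hsm : s (m+1) ≠ 0) :
    (s (m+1)).natTrailingDegree = ∑ j ∈ Finset.range (m+1), 2^j * b j := by
  clear hsm
  suffices H : ∀ k, s k ≠ 0 ∧ (s k).natTrailingDegree = ∑ j ∈ Finset.range k, 2^j * b j from
    (H (m+1)).2
  intro k
  induction k with
  | zero => simp [hs0]
  | succ k ih =>
      obtain ⟨hne, hdeg⟩ := ih
      have hNlt : (∑ j ∈ Finset.range k, 2^j * b j) < 2^k := by
        have h1 : (∑ j ∈ Finset.range k, 2^j * b j) ≤ ∑ j ∈ Finset.range k, 2^j * 1 := by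
          refine Finset.sum_le_sum (fun j _ => ?_)
          rcases hb j with h | h <;> simp [h]
        simp only [mul_one, two_pow_sum] at h1
        have : 1 ≤ 2^k := Nat.one_le_two_pow
        omega
      have hx : (X : Polynomial ℤ)^(2^k) ≠ 0 := pow_ne_zero _ X_ne_zero
      rcases hb k with h1 | h1
      · -- b k = 0 : s (k+1) = s k + X^(2^k) * t k
        have heq : s (k+1) = s k + X^(2^k) * t k := by
          rw [hs k, h1]
          push_cast
          simp only [map_one, map_zero, one_mul, zero_mul, mul_zero, sub_zero, add_zero, zero_add]
        have hq : ∀ n ≤ (s k).natTrailingDegree, (X^(2^k) * t k).coeff n = 0 := by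
          intro n hn
          have hn2 : n < 2^k := lt_of_le_of_lt (hdeg ▸ hn) hNlt
          rcases eq_or_ne (t k) 0 with h | h
          · simp [h]
          · apply coeff_eq_zero_of_lt_natTrailingDegree
            rw [natTrailingDegree_mul hx h, natTrailingDegree_X_pow]
            omega
        have hc : (s k + X^(2^k) * t k).coeff ((s k).natTrailingDegree) ≠ 0 := by
          rw [coeff_add, hq _ le_rfl, add_zero]
          exact (coeff_natTrailingDegree_ne_zero).2 hne
        refine ⟨heq ▸ fun h0 => hc (by rw [h0, coeff_zero]), ?_⟩
        rw [heq, ntd_add_of_lt hne hq, hdeg, Finset.sum_range_succ, h1, mul_zero, add_zero]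
      · -- b k = 1 : s (k+1) = X^(2^k) * s k
        have heq : s (k+1) = X^(2^k) * s k := by
          rw [hs k, h1]
          push_cast
          simp only [sub_self, map_zero, zero_mul, map_one, one_mul, zero_add]
          ring
        refine ⟨heq ▸ mul_ne_zero hx hne, ?_⟩
        rw [heq, natTrailingDegree_mul hx hne, natTrailingDegree_X_pow, hdeg,
          Finset.sum_range_succ, h1, mul_one, add_comm]
end

section
/- Let {b_k} be a binary sequence with b_{k₀} = 1 for some k₀, and let s_k, t_k be as defined. Then for all m ≥ k₀, deg(s_m + t_m) = 2^m + Σ_{j=k₀+1}^{m} 2^{j−1} b_j, where k₀ is the index of the first occurrence of 1 in {b_k}. In particular, deg(s_m + t_m) < 2^{m+1}. -/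
open Polynomial

theorem sm_add_tm_natDegree
    (b : ℕ → ℕ) (hb : ∀ k, b k = 0 ∨ b k = 1)
    (s t : ℕ → Polynomial ℤ)
    (hs0 : s 0 = 1) (ht0 : t 0 = 0)
    (hs : ∀ k, s (k+1) = C (1 - (b k : ℤ)) * s k + X^(2^k) * (C (b k : ℤ) * (s k - t k) + t k))
    (ht : ∀ k, t (k+1) = C (b k : ℤ) * s k + t k)
    (k₀ : ℕ) (hk₀ : b k₀ = 1) (hk₀min : ∀ j < k₀, b j = 0) :
    ∀ m : ℕ, k₀ ≤ m →
      (s (m+1) + t (m+1)).natDegree = 2^m + ∑ j ∈ Finset.Icc (k₀+1) m, 2^(j-1) * b j ∧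
      (s (m+1) + t (m+1)).natDegree < 2^(m+1) := by
  have base : ∀ j ≤ k₀, s j = 1 ∧ t j = 0 := by
    intro j hj
    induction j with
    | zero => exact ⟨hs0, ht0⟩
    | succ n ih =>
      obtain ⟨hsn, htn⟩ := ih (Nat.le_of_succ_le hj)
      have hbn : b n = 0 := hk₀min n hj
      constructor
      · rw [hs n, hsn, htn, hbn]; simp
      · rw [ht n, hsn, htn, hbn]; simp
  have hsk : s (k₀+1) = X^(2^k₀) := by
    obtain ⟨hsn, htn⟩ := base k₀ le_rfl
    rw [hs k₀, hsn, htn, hk₀]; simp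
  have htk : t (k₀+1) = 1 := by
    obtain ⟨hsn, htn⟩ := base k₀ le_rfl
    rw [ht k₀, hsn, htn, hk₀]; simp
  have key : ∀ m, k₀ ≤ m →
      (s (m+1)).degree = ((2^m + ∑ j ∈ Finset.Icc (k₀+1) m, 2^(j-1) * b j : ℕ) : WithBot ℕ) ∧
      (t (m+1)).degree = ((∑ j ∈ Finset.Icc (k₀+1) m, 2^(j-1) * b j : ℕ) : WithBot ℕ) ∧
      (∑ j ∈ Finset.Icc (k₀+1) m, 2^(j-1) * b j) < 2^m := by
    intro m hm
    induction m, hm using Nat.le_induction with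
    | base =>
      rw [Finset.Icc_eq_empty (by omega)]
      simp [hsk, htk, degree_X_pow]
    | succ m hm ih =>
      obtain ⟨hds, hdt, hlt⟩ := ih
      have hsum : ∑ j ∈ Finset.Icc (k₀+1) (m+1), 2^(j-1) * b j
          = (∑ j ∈ Finset.Icc (k₀+1) m, 2^(j-1) * b j) + 2^m * b (m+1) := by
        rw [Finset.sum_Icc_succ_top (by omega)]; norm_num
      set S := ∑ j ∈ Finset.Icc (k₀+1) m, 2^(j-1) * b j with hS
      rcases hb (m+1) with hb1 | hb1
      · -- b (m+1) = 0 : s' = s + X^(2^(m+1)) * t, t' = t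
        have hs' : s (m+2) = s (m+1) + X^(2^(m+1)) * t (m+1) := by
          rw [hs (m+1), hb1]; push_cast; simp [C_0, C_1]; try ring
        have ht' : t (m+2) = t (m+1) := by
          rw [ht (m+1), hb1]; push_cast; simp [C_0, C_1]; try ring
        have hdX : (X^(2^(m+1)) * t (m+1) : Polynomial ℤ).degree
            = ((2^(m+1) + S : ℕ) : WithBot ℕ) := by
          rw [degree_mul, degree_X_pow, hdt]
          push_cast; ring
        have hlt2 : (s (m+1)).degree < (X^(2^(m+1)) * t (m+1) : Polynomial ℤ).degree := by
          rw [hds, hdX]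
          exact_mod_cast (by have := Nat.pow_lt_pow_succ (a := 2) (by norm_num) (n := m); omega :
            2^m + S < 2^(m+1) + S)
        refine ⟨?_, ?_, ?_⟩
        · rw [hs', degree_add_eq_right_of_degree_lt hlt2, hdX, hsum, hb1]
          norm_num
        · rw [ht', hdt, hsum, hb1]
          norm_num
        · rw [hsum, hb1]
          have := Nat.pow_lt_pow_succ (a := 2) (by norm_num) (n := m)
          omega
      · -- b (m+1) = 1 : s' = X^(2^(m+1)) * s, t' = s + t
        have hs' : s (m+2) = X^(2^(m+1)) * s (m+1) := by
          rw [hs (m+1), hb1]; push_cast; simp [C_0, C_1]; try ring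
        have ht' : t (m+2) = s (m+1) + t (m+1) := by
          rw [ht (m+1), hb1]; push_cast; simp [C_0, C_1]; try ring
        have hlt2 : (t (m+1)).degree < (s (m+1)).degree := by
          rw [hds, hdt]
          exact_mod_cast (by omega : S < 2^m + S)
        refine ⟨?_, ?_, ?_⟩
        · rw [hs', degree_mul, degree_X_pow, hds, hsum, hb1]
          push_cast; ring
        · rw [ht', add_comm (s (m+1)), degree_add_eq_right_of_degree_lt hlt2, hds, hsum, hb1]
          push_cast; ring
        · rw [hsum, hb1]
          have := Nat.pow_lt_pow_succ (a := 2) (by norm_num) (n := m)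
          omega
  intro m hm
  obtain ⟨hds, hdt, hlt⟩ := key m hm
  have hlt2 : (t (m+1)).degree < (s (m+1)).degree := by
    rw [hds, hdt]
    exact_mod_cast (by omega : (∑ j ∈ Finset.Icc (k₀+1) m, 2^(j-1) * b j) <
      2^m + ∑ j ∈ Finset.Icc (k₀+1) m, 2^(j-1) * b j)
  have hdeg : (s (m+1) + t (m+1)).degree
      = ((2^m + ∑ j ∈ Finset.Icc (k₀+1) m, 2^(j-1) * b j : ℕ) : WithBot ℕ) := by
    rw [degree_add_eq_left_of_degree_lt hlt2, hds]
  have hnd := natDegree_eq_of_degree_eq_some hdeg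
  refine ⟨hnd, ?_⟩
  rw [hnd]
  have := Nat.pow_lt_pow_succ (a := 2) (by norm_num) (n := m)
  omega
end

section
/- Let ψ_n(q) = a(2^n − 1; q). Then for all n ≥ 2, ψ_n(q)·ψ_n(q²) − ψ_{n+1}(q)·ψ_{n−1}(q²) = q^{2(2^{n−1} − 1)}. -/
open Polynomial

lemma stern_zero : stern 0 = 0 := by rw [stern]
lemma stern_one : stern 1 = 1 := by rw [stern]

lemma stern_pow (n : ℕ) : stern (2^n) = 1 := by
  induction n with
  | zero => rw [show (2:ℕ)^0 = 1 from rfl, stern]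
  | succ n ih =>
    have h : 2^(n+1) = 2*(2^n - 1) + 2 := by have := Nat.one_le_two_pow (n := n); ring_nf; omega
    rw [h, stern_even, Nat.sub_add_cancel Nat.one_le_two_pow, ih, Polynomial.one_comp]

lemma psi_step (n : ℕ) : stern (2^(n+1)-1) = X * (stern (2^n - 1)).comp (X^2) + 1 := by
  cases n with
  | zero =>
    show stern 1 = X * (stern 0).comp (X^2) + 1
    rw [stern_one, stern_zero]; simp
  | succ n =>
    have hp : 2 ≤ 2^(n+1) := by
      have h2 : 2^(n+1) = 2*2^n := by ring
      have := Nat.one_le_two_pow (n := n); omega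
    have h : 2^(n+1+1) - 1 = 2*(2^(n+1)-2)+3 := by
      have : 2^(n+1+1) = 2*2^(n+1) := by ring
      omega
    rw [h, stern_odd, show 2^(n+1)-2+1 = 2^(n+1)-1 from by omega,
      show 2^(n+1)-2+2 = 2^(n+1) from by omega, stern_pow, Polynomial.one_comp]

lemma psi_diff (n : ℕ) : stern (2^(n+1)-1) = stern (2^n-1) + X^(2^n-1) := by
  induction n with
  | zero =>
    show stern 1 = stern 0 + X^0
    rw [stern_one, stern_zero]; ring
  | succ n ih =>
    have hp : 1 ≤ 2^n := Nat.one_le_two_pow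
    have he : 2^(n+1) - 1 = 2*(2^n-1) + 1 := by
      have : 2^(n+1) = 2*2^n := by ring
      omega
    rw [psi_step (n+1)]
    conv_lhs => rw [ih]
    rw [psi_step n, add_comp, pow_comp, X_comp, ← pow_mul, he]
    ring

theorem psi_quadratic_identity (n : ℕ) (hn : 2 ≤ n) :
    stern (2^n - 1) * (stern (2^n - 1)).comp (X^2) -
      stern (2^(n+1) - 1) * (stern (2^(n-1) - 1)).comp (X^2) =
      X^(2 * (2^(n-1) - 1)) := by
  obtain ⟨m, rfl⟩ : ∃ m, n = m+1 := ⟨n-1, by omega⟩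
  simp only [Nat.add_sub_cancel]
  have hC : (stern (2^(m+1)-1)).comp (X^2) =
      (stern (2^m-1)).comp (X^2) + X^(2*(2^m-1)) := by
    rw [psi_diff m, add_comp, pow_comp, X_comp, ← pow_mul]
  rw [show m+1+1 = (m+1)+1 from rfl, psi_step (m+1), hC, psi_step m]
  ring
end

section
/- Let ψ_n(q) = a(2^n − 1; q). Then for all m, n with 2 ≤ 2m < n, ψ_n(q) − q^{2^{2m} − 1}·ψ_{n−2m}(q^{4^m}) = ψ_{2m}(q). -/
open Polynomial

lemma stern_pow2 (k : ℕ) : stern (2^k) = 1 := by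
  induction k with
  | zero => simp [stern]
  | succ k ih =>
    have : 2^(k+1) = 2*(2^k - 1) + 2 := by
      have := Nat.one_le_two_pow (n := k); omega
    rw [this, stern_even]
    have : 2^k - 1 + 1 = 2^k := by have := Nat.one_le_two_pow (n := k); omega
    rw [this, ih, one_comp]

lemma psi_rec (n : ℕ) (hn : 2 ≤ n) :
    stern (2^n - 1) = X * (stern (2^(n-1) - 1)).comp (X^2) + 1 := by
  have h1 : 1 ≤ 2^(n-1) := Nat.one_le_two_pow
  have h2 : 2^n = 2 * 2^(n-1) := by
    rw [← pow_succ']; congr 1; omega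
  have h3 : 2^n - 1 = 2*(2^(n-1) - 2) + 3 := by
    have : 2 ≤ 2^(n-1) := by
      calc 2 = 2^1 := rfl
      _ ≤ 2^(n-1) := Nat.pow_le_pow_right (by norm_num) (by omega)
    omega
  have h4 : 2^(n-1) - 2 + 1 = 2^(n-1) - 1 := by
    have : 2 ≤ 2^(n-1) := by
      calc 2 = 2^1 := rfl
      _ ≤ 2^(n-1) := Nat.pow_le_pow_right (by norm_num) (by omega)
    omega
  have h5 : 2^(n-1) - 2 + 2 = 2^(n-1) := by
    have : 2 ≤ 2^(n-1) := by
      calc 2 = 2^1 := rfl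
      _ ≤ 2^(n-1) := Nat.pow_le_pow_right (by norm_num) (by omega)
    omega
  rw [h3, stern_odd, h4, h5, ← Nat.sub_add_cancel (show 1 ≤ n - 1 by omega)]
  rw [show n - 1 - 1 + 1 = n - 1 from by omega]
  rw [stern_pow2, one_comp]

lemma stern_three : stern 3 = X + 1 := by
  rw [show (3:ℕ) = 2*0+3 from rfl, stern_odd]
  simp [stern]

lemma key_base (n : ℕ) (hn : 3 ≤ n) :
    stern (2^n - 1) =
      X^3 * (stern (2^(n-2) - 1)).comp (X^4) + stern 3 := by
  rw [psi_rec n (by omega), psi_rec (n-1) (by omega),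
    show n - 1 - 1 = n - 2 from by omega]
  rw [add_comp, mul_comp, X_comp, comp_assoc, X_pow_comp, one_comp,
    stern_three]
  rw [show ((X:ℤ[X])^2)^2 = X^4 from by ring]
  ring

lemma key (m : ℕ) (hm : 1 ≤ m) : ∀ n, 2*m < n →
    stern (2^n - 1) =
      X^(4^m - 1) * (stern (2^(n-2*m) - 1)).comp (X^(4^m)) + stern (4^m - 1) := by
  induction m with
  | zero => omega
  | succ m ih =>
    intro n hn
    by_cases hm0 : m = 0
    · subst hm0
      simpa using key_base n (by omega)
    · have ihn := ih (by omega) n (by omega)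
      have h2 := key_base (n - 2*m) (by omega)
      have h3 := ih (by omega) (2*m+2) (by omega)
      rw [h2] at ihn
      rw [show n - 2*m - 2 = n - 2*(m+1) from by omega] at ihn
      rw [show 2*m+2 - 2*m = 2 from by omega] at h3
      have h4pos : 1 ≤ 4^m := Nat.one_le_pow _ _ (by norm_num)
      rw [show (2:ℕ)^2 - 1 = 3 from rfl] at h3
      have h3' : stern (4^(m+1) - 1) =
          X^(4^m - 1) * (stern 3).comp (X^(4^m)) + stern (4^m - 1) := by
        rw [show (4:ℕ)^(m+1) = 2^(2*m+2) from by
          rw [show (4:ℕ) = 2^2 from rfl, ← pow_mul]; ring_nf]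
        exact h3
      rw [add_comp, mul_comp, X_pow_comp, comp_assoc, X_pow_comp] at ihn
      rw [show ((X:ℤ[X])^(4^m))^4 = X^(4^(m+1)) from by
        rw [← pow_mul]; ring_nf] at ihn
      rw [show ((X:ℤ[X])^(4^m))^3 = X^(3*4^m) from by rw [← pow_mul, mul_comm]] at ihn
      rw [ihn, h3']
      rw [mul_add, ← mul_assoc, ← pow_add]
      rw [show 4^m - 1 + 3*4^m = 4^(m+1) - 1 from by
        have : (4:ℕ)^(m+1) = 4*4^m := by ring
        omega]
      ring

theorem psi_main_recurrence (m n : ℕ) (hm : 2 ≤ 2 * m) (hn : 2 * m < n) :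
    stern (2^n - 1) - X^(2^(2*m) - 1) * (stern (2^(n-2*m) - 1)).comp (X^(4^m)) =
      stern (2^(2*m) - 1) := by
  have h4 : (2:ℕ)^(2*m) = 4^m := by rw [pow_mul]; norm_num
  rw [h4, key m (by omega) n hn]
  ring
end
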